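/- Let p be a prime, let q be an odd prime dividing p + 1, let σ be an automorphism of ℤ/p × ℤ/p of order q, and let G = (ℤ/p × ℤ/p) ⋊ ℤ/q be the semidirect product in which a fixed generator of ℤ/q acts by σ. Then G is nonabelian and every proper subgroup of G is abelian. -/

import Mathlib

section helpers

variable {p q : ℕ}

lemma not_q_dvd_pred (hp : p.Prime) (hq : q.Prime) (hqodd : Odd q) (hdvd : q ∣ p + 1) :
    ¬ q ∣ p - 1 := by
  intro h
  have hp2 : 2 ≤ p := hp.two_le
  have h2 : q ∣ 2 := by
    have e : (p+1) - (p-1) = 2 := by omega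
    exact e ▸ Nat.dvd_sub hdvd h
  have := Nat.le_of_dvd (by norm_num) h2
  have := hq.two_le
  have := Nat.odd_iff.mp hqodd
  omega

lemma p_ne_q (hp : p.Prime) (hq : q.Prime) (hdvd : q ∣ p + 1) : p ≠ q := by
  rintro rfl
  have : p ∣ 1 := (Nat.dvd_add_right dvd_rfl).mp hdvd
  have := Nat.eq_one_of_dvd_one this
  have := hp.one_lt
  omega

lemma root_of_unity_triv (hp : p.Prime) (hq : q.Prime) (hqodd : Odd q) (hdvd : q ∣ p + 1)
    {b : ZMod p} (hb : b ≠ 0) (hbq : b ^ q = 1) : b = 1 := by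
  haveI : Fact p.Prime := ⟨hp⟩
  have h1 : orderOf b ∣ q := orderOf_dvd_of_pow_eq_one hbq
  have h2 : orderOf b ∣ p - 1 := orderOf_dvd_of_pow_eq_one (ZMod.pow_card_sub_one_eq_one hb)
  have hco : Nat.Coprime q (p - 1) :=
    (Nat.Prime.coprime_iff_not_dvd hq).mpr (not_q_dvd_pred hp hq hqodd hdvd)
  have hord : orderOf b = 1 :=
    Nat.eq_one_of_dvd_coprimes hco h1 h2
  exact orderOf_eq_one_iff.mp hord

end helpers

section lin

variable {p : ℕ}

lemma aut_smul [NeZero p] (g : AddAut (ZMod p × ZMod p)) (c : ZMod p) (v : ZMod p × ZMod p) :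
    g (c • v) = c • g v := by
  rw [← ZMod.natCast_rightInverse c, Nat.cast_smul_eq_nsmul, Nat.cast_smul_eq_nsmul]
  exact map_nsmul (g : ZMod p × ZMod p ≃+ ZMod p × ZMod p) c.val v

lemma span_two [Fact p.Prime] {x y : ZMod p × ZMod p}
    (hd : x.1 * y.2 - x.2 * y.1 ≠ 0) (v : ZMod p × ZMod p) :
    ∃ α β : ZMod p, v = α • x + β • y := by
  set d := x.1 * y.2 - x.2 * y.1 with hdef
  refine ⟨(v.1 * y.2 - v.2 * y.1) / d, (x.1 * v.2 - x.2 * v.1) / d, ?_⟩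
  have : (v.1, v.2) = ((v.1 * y.2 - v.2 * y.1) / d * x.1 + (x.1 * v.2 - x.2 * v.1) / d * y.1,
      (v.1 * y.2 - v.2 * y.1) / d * x.2 + (x.1 * v.2 - x.2 * v.1) / d * y.2) := by
    refine Prod.ext ?_ ?_ <;> · dsimp only; field_simp; ring
  simpa [Prod.ext_iff, Prod.smul_fst] using this

lemma indep_two [Fact p.Prime] {x y : ZMod p × ZMod p}
    (hd : x.1 * y.2 - x.2 * y.1 ≠ 0) {α β : ZMod p} (h : α • x + β • y = 0) :
    α = 0 ∧ β = 0 := by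
  have h1 : α * x.1 + β * y.1 = 0 := by
    have := congrArg Prod.fst h; simpa using this
  have h2 : α * x.2 + β * y.2 = 0 := by
    have := congrArg Prod.snd h; simpa using this
  constructor
  · have : α * (x.1 * y.2 - x.2 * y.1) = 0 := by linear_combination y.2 * h1 - y.1 * h2
    rcases mul_eq_zero.mp this with h | h
    · exact h
    · exact absurd h hd
  · have : β * (x.1 * y.2 - x.2 * y.1) = 0 := by linear_combination x.1 * h2 - x.2 * h1
    rcases mul_eq_zero.mp this with h | h
    · exact h
    · exact absurd h hd

end lin

section nofix

variable {p q : ℕ}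

lemma nofix (hp : p.Prime) (hq : q.Prime) (hqodd : Odd q) (hdvd : q ∣ p + 1)
    (τ : AddAut (ZMod p × ZMod p)) (hτq : q • τ = 0)
    {x : ZMod p × ZMod p} (hxne : x ≠ 0) (hx : τ x = x) : τ = 0 := by
  haveI : Fact p.Prime := ⟨hp⟩
  have pow_apply : ∀ (n : ℕ) (v : ZMod p × ZMod p), ((n+1) • τ) v = τ ((n • τ) v) := by
    intro n v
    rw [succ_nsmul']
    exact AddAut.add_apply _ τ (n • τ) v
  obtain ⟨y, hd⟩ : ∃ y : ZMod p × ZMod p, x.1 * y.2 - x.2 * y.1 ≠ 0 := by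
    by_cases h1 : x.1 = 0
    · have h2 : x.2 ≠ 0 := by
        intro h2; exact hxne (Prod.ext h1 h2)
      exact ⟨(1, 0), by simpa using h2⟩
    · exact ⟨(0, 1), by simpa using h1⟩
  obtain ⟨a, b, hy⟩ := span_two hd (τ y)
  have key : ∀ n : ℕ, ∃ c : ZMod p, (n • τ) y = c • x + b ^ n • y := by
    intro n
    induction n with
    | zero => exact ⟨0, by simp⟩
    | succ n ih =>
      obtain ⟨c, hc⟩ := ih
      refine ⟨c + b ^ n * a, ?_⟩
      rw [pow_apply, hc, map_add, aut_smul, aut_smul, hx, hy]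
      rw [pow_succ]
      module
  obtain ⟨c, hc⟩ := key q
  rw [hτq, AddAut.zero_apply] at hc
  have h0 : c • x + (b ^ q - 1) • y = 0 := by
    calc c • x + (b ^ q - 1) • y = (c • x + b ^ q • y) - y := by
          rw [sub_smul, one_smul]; abel
    _ = y - y := by rw [← hc]
    _ = 0 := sub_self y
  obtain ⟨hc0, hbq1⟩ := indep_two hd h0
  have hbq : b ^ q = 1 := by rwa [sub_eq_zero] at hbq1
  have hb : b ≠ 0 := by
    intro hb0
    have h1 : τ y = τ (a • x) := by rw [aut_smul, hx, hy, hb0, zero_smul, add_zero]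
    have hyax : y = a • x := τ.injective h1
    have h2 : a • x + (-1 : ZMod p) • y = 0 := by
      rw [neg_one_smul, ← hyax]; exact add_neg_cancel y
    have := (indep_two hd h2).2
    exact one_ne_zero (neg_eq_zero.mp this)
  have hb1 : b = 1 := root_of_unity_triv hp hq hqodd hdvd hb hbq
  subst hb1
  rw [one_smul] at hy
  have key2 : ∀ n : ℕ, (n • τ) y = ((n : ZMod p) * a) • x + y := by
    intro n
    induction n with
    | zero => simp
    | succ n ih =>
      rw [pow_apply, ih, map_add, aut_smul, hx, hy]
      push_cast
      module
  have hc2 := key2 q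
  rw [hτq, AddAut.zero_apply] at hc2
  have h0' : ((q : ZMod p) * a) • x + (0 : ZMod p) • y = 0 := by
    rw [zero_smul, add_zero]
    have : ((q : ZMod p) * a) • x + y - y = y - y := by rw [← hc2]
    simpa using this
  have hqa := (indep_two hd h0').1
  have hqz : (q : ZMod p) ≠ 0 := by
    rw [Ne, ZMod.natCast_eq_zero_iff]
    intro hdq
    exact p_ne_q hp hq hdvd ((Nat.prime_dvd_prime_iff_eq hp hq).mp hdq)
  have ha : a = 0 := by
    rcases mul_eq_zero.mp hqa with h | h
    · exact absurd h hqz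
    · exact h
  subst ha
  rw [zero_smul, zero_add] at hy
  have hfix : ∀ v, τ v = v := by
    intro v
    obtain ⟨α, β, hv⟩ := span_two hd v
    rw [hv, map_add, aut_smul, aut_smul, hx, hy]
  exact AddEquiv.ext fun v => by rw [hfix v, AddAut.zero_apply]

end nofix

section eigen

variable {p q : ℕ}

lemma no_eigen (hp : p.Prime) (hq : q.Prime) (hqodd : Odd q) (hdvd : q ∣ p + 1)
    (τ : AddAut (ZMod p × ZMod p)) (hτq : q • τ = 0) (hτ1 : τ ≠ 0)
    {x : ZMod p × ZMod p} (hxne : x ≠ 0) :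
    x.1 * (τ x).2 - x.2 * (τ x).1 ≠ 0 := by
  haveI : Fact p.Prime := ⟨hp⟩
  intro hd
  have pow_apply : ∀ (n : ℕ) (v : ZMod p × ZMod p), ((n+1) • τ) v = τ ((n • τ) v) := by
    intro n v
    rw [succ_nsmul']
    exact AddAut.add_apply _ τ (n • τ) v
  obtain ⟨c, hc⟩ : ∃ c : ZMod p, τ x = c • x := by
    by_cases h1 : x.1 = 0
    · have h2 : x.2 ≠ 0 := fun h2 => hxne (Prod.ext h1 h2)
      have h3 : x.2 * (τ x).1 = 0 := by linear_combination -hd + (τ x).2 * h1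
      have h4 : (τ x).1 = 0 := by
        rcases mul_eq_zero.mp h3 with h | h
        · exact absurd h h2
        · exact h
      refine ⟨(τ x).2 / x.2, Prod.ext ?_ ?_⟩
      · simp [h1, h4, smul_eq_mul]
      · simp only [Prod.smul_snd, smul_eq_mul]
        field_simp
    · refine ⟨(τ x).1 / x.1, Prod.ext ?_ ?_⟩
      · simp only [Prod.smul_fst, smul_eq_mul]
        field_simp
      · simp only [Prod.smul_snd, smul_eq_mul]
        field_simp
        linear_combination hd
  have hcne : c ≠ 0 := by
    intro h0
    rw [h0, zero_smul] at hc
    exact hxne (τ.injective (hc.trans (map_zero (τ : ZMod p × ZMod p ≃+ ZMod p × ZMod p)).symm))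
  have key : ∀ n : ℕ, (n • τ) x = c ^ n • x := by
    intro n
    induction n with
    | zero => simp
    | succ n ih =>
      rw [pow_apply, ih, aut_smul, hc, smul_smul, ← pow_succ]
  have hq' := key q
  rw [hτq, AddAut.zero_apply] at hq'
  have h0 : (c ^ q - 1) • x = 0 := by
    rw [sub_smul, one_smul, ← hq', sub_self]
  have hcq : c ^ q = 1 := by
    have h5 : x.1 ≠ 0 ∨ x.2 ≠ 0 := by
      by_contra h
      push_neg at h
      exact hxne (Prod.ext h.1 h.2)
    have e1 : (c ^ q - 1) * x.1 = 0 := by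
      have := congrArg Prod.fst h0; simpa using this
    have e2 : (c ^ q - 1) * x.2 = 0 := by
      have := congrArg Prod.snd h0; simpa using this
    rcases h5 with h | h
    · rcases mul_eq_zero.mp e1 with h' | h'
      · rwa [sub_eq_zero] at h'
      · exact absurd h' h
    · rcases mul_eq_zero.mp e2 with h' | h'
      · rwa [sub_eq_zero] at h'
      · exact absurd h' h
  have hc1 : c = 1 := root_of_unity_triv hp hq hqodd hdvd hcne hcq
  rw [hc1, one_smul] at hc
  exact hτ1 (nofix hp hq hqodd hdvd τ hτq hxne hc)

end eigen

section main

open Multiplicative SemidirectProduct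

lemma toMult_pow {M : Type*} [AddCommGroup M] (σ : AddAut M) (n : ℕ) (v : M) :
    ((AddEquiv.toMultiplicative σ : MulAut (Multiplicative M)) ^ n) (ofAdd v) =
      ofAdd ((n • σ) v) := by
  induction n with
  | zero => rfl
  | succ n ih =>
    rw [pow_succ', succ_nsmul', MulAut.mul_apply, AddAut.add_apply, ih]
    rfl

theorem stmt_11 (p q : ℕ) (hp : p.Prime) (hq : q.Prime) (hqodd : Odd q) (hdvd : q ∣ p + 1)
    (σ : AddAut (ZMod p × ZMod p)) (hσ : addOrderOf σ = q)
    (φ : Multiplicative (ZMod q) →* MulAut (Multiplicative (ZMod p × ZMod p)))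
    (hφ : φ (Multiplicative.ofAdd (1 : ZMod q)) = AddEquiv.toMultiplicative σ) :
    (∃ a b : Multiplicative (ZMod p × ZMod p) ⋊[φ] Multiplicative (ZMod q),
      a * b ≠ b * a) ∧
    (∀ H : Subgroup (Multiplicative (ZMod p × ZMod p) ⋊[φ] Multiplicative (ZMod q)),
      H ≠ ⊤ → ∀ a b, a ∈ H → b ∈ H → a * b = b * a) := by
  haveI : Fact p.Prime := ⟨hp⟩
  haveI : Fact q.Prime := ⟨hq⟩
  have hq1 : q ≠ 1 := hq.one_lt.ne'
  have hσq : q • σ = 0 := by rw [← hσ]; exact addOrderOf_nsmul_eq_zero σ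
  have hσ1 : σ ≠ 0 := by
    intro h
    rw [h, addOrderOf_zero] at hσ
    exact hq1 hσ.symm
  -- the action of φ in terms of powers of σ
  have hφ_pow : ∀ (k : ZMod q) (v : ZMod p × ZMod p),
      φ (ofAdd k) (ofAdd v) = ofAdd ((k.val • σ) v) := by
    intro k v
    have e : ofAdd k = (ofAdd (1 : ZMod q)) ^ k.val := by
      rw [← ofAdd_nsmul]
      congr 1
      rw [nsmul_eq_mul, mul_one]
      exact (ZMod.natCast_rightInverse k).symm
    rw [e, map_pow, hφ]
    exact toMult_pow σ k.val v
  constructor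
  · -- nonabelian
    obtain ⟨x, hx⟩ : ∃ x : ZMod p × ZMod p, σ x ≠ x := by
      by_contra h
      push_neg at h
      exact hσ1 (AddEquiv.ext h)
    refine ⟨inl (ofAdd x), inr (ofAdd (1 : ZMod q)), ?_⟩
    intro hcontra
    have := congrArg SemidirectProduct.left hcontra
    simp only [mul_left, left_inl, right_inl, left_inr, right_inr, map_one, MulAut.one_apply,
      mul_one, one_mul, hφ] at this
    exact hx (ofAdd.injective this.symm)
  · -- proper subgroups are abelian
    intro H hH a b ha hb
    by_cases hmix : ∃ h ∈ H, h.right ≠ 1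
    swap
    · -- every element of H lies in the kernel copy
      push_neg at hmix
      apply SemidirectProduct.ext
      · rw [mul_left, mul_left, hmix a ha, hmix b hb, map_one, MulAut.one_apply,
          MulAut.one_apply, mul_comm]
      · rw [mul_right, mul_right, mul_comm]
    obtain ⟨h, hhH, hhr⟩ := hmix
    set k : ZMod q := toAdd h.right with hkdef
    have hhr' : h.right = ofAdd k := rfl
    have hk : k ≠ 0 := by
      intro e
      apply hhr
      rw [hhr', e, ofAdd_zero]
    set τ : AddAut (ZMod p × ZMod p) := k.val • σ with hτdef
    have hτq : q • τ = 0 := by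
      rw [hτdef, smul_smul, mul_comm, ← smul_smul, hσq, nsmul_zero]
    have hτ1 : τ ≠ 0 := by
      intro e
      rw [hτdef] at e
      have hdvd' : addOrderOf σ ∣ k.val := addOrderOf_dvd_of_nsmul_eq_zero e
      rw [hσ] at hdvd'
      have h1 : k.val < q := ZMod.val_lt k
      have h2 : k.val ≠ 0 := fun e' => hk ((ZMod.val_eq_zero k).mp e')
      have := Nat.le_of_dvd (Nat.pos_of_ne_zero h2) hdvd'
      omega
    -- conjugation by h maps the kernel copy into itself via τ
    have hconj : ∀ v : ZMod p × ZMod p, inl (ofAdd v) ∈ H →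
        inl (ofAdd (τ v)) ∈ H := by
      intro v hv
      have hmem : h * inl (ofAdd v) * h⁻¹ ∈ H := H.mul_mem (H.mul_mem hhH hv) (H.inv_mem hhH)
      have heq : h * inl (ofAdd v) * h⁻¹ = inl (ofAdd (τ v)) := by
        have hdecomp : inl h.left * inr h.right = h :=
          (SemidirectProduct.mk_eq_inl_mul_inr h.right h.left).symm
        have e1 : h * inl (ofAdd v) * h⁻¹ =
            inl h.left * (inr h.right * inl (ofAdd v) * inr h.right⁻¹) * inl h.left⁻¹ := by
          rw [map_inv, map_inv]
          conv_lhs => rw [← hdecomp]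
          group
        rw [e1, ← SemidirectProduct.inl_aut, ← map_mul, ← map_mul]
        congr 1
        rw [mul_comm h.left, mul_inv_cancel_right, hhr', hφ_pow, hτdef]
      rw [← heq]; exact hmem
    by_cases hpure : ∃ x : ZMod p × ZMod p, x ≠ 0 ∧ inl (ofAdd x) ∈ H
    · exfalso
      apply hH
      obtain ⟨x, hx0, hxH⟩ := hpure
      have hd := no_eigen hp hq hqodd hdvd τ hτq hτ1 hx0
      have hτxH : inl (ofAdd (τ x)) ∈ H := hconj x hxH
      have hsm : ∀ (c : ZMod p) (w : ZMod p × ZMod p), inl (ofAdd w) ∈ H →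
          inl (φ := φ) (ofAdd (c • w)) ∈ H := by
        intro c w hw
        have e : Multiplicative.ofAdd (c • w) = (Multiplicative.ofAdd w) ^ c.val := by
          rw [← ofAdd_nsmul]
          congr 1
          rw [← Nat.cast_smul_eq_nsmul (ZMod p), ZMod.natCast_rightInverse c]
        rw [e, map_pow]
        exact H.pow_mem hw c.val
      have hN : ∀ v : ZMod p × ZMod p, inl (φ := φ) (ofAdd v) ∈ H := by
        intro v
        obtain ⟨α, β, hv⟩ := span_two hd v
        rw [hv, ofAdd_add, map_mul]
        exact H.mul_mem (hsm α x hxH) (hsm β (τ x) hτxH)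
      have hinr : inr h.right ∈ H := by
        have e : inr (φ := φ) h.right = (inl h.left)⁻¹ * h := by
          rw [eq_inv_mul_iff_mul_eq]
          exact (SemidirectProduct.mk_eq_inl_mul_inr h.right h.left).symm
        rw [e]
        exact H.mul_mem (H.inv_mem (hN (toAdd h.left))) hhH
      rw [Subgroup.eq_top_iff']
      intro g
      have hg : inr g.right ∈ H := by
        obtain ⟨n, hn⟩ : ∃ n : ℕ, g.right = h.right ^ n := by
          refine ⟨(toAdd g.right * k⁻¹).val, ?_⟩
          rw [hhr', ← ofAdd_nsmul]
          have e2 : ((toAdd g.right * k⁻¹).val : ℕ) • k = toAdd g.right := by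
            rw [nsmul_eq_mul, ZMod.natCast_rightInverse (toAdd g.right * k⁻¹),
              mul_assoc, inv_mul_cancel₀ hk, mul_one]
          rw [e2, ofAdd_toAdd]
        rw [hn, map_pow]
        exact H.pow_mem hinr n
      have hmul : inl (φ := φ) g.left * inr g.right ∈ H := H.mul_mem (hN (toAdd g.left)) hg
      have e3 : (⟨g.left, g.right⟩ : _ ⋊[φ] _) ∈ H := by
        rw [SemidirectProduct.mk_eq_inl_mul_inr]
        exact hmul
      exact e3
    · push_neg at hpure
      have key : ∀ c ∈ H, SemidirectProduct.right c = 1 → c = 1 := by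
        intro c hc hcr
        have hcl : c = inl c.left := by
          apply SemidirectProduct.ext
          · rw [left_inl]
          · rw [right_inl, hcr]
        by_cases hx : toAdd c.left = 0
        · have h1 : c.left = 1 := by
            rw [← ofAdd_toAdd c.left, hx, ofAdd_zero]
          rw [hcl, h1, map_one]
        · exfalso
          rw [hcl] at hc
          exact hpure (toAdd c.left) hx hc
      have hcomm := key ((a * b) * (b * a)⁻¹)
        (H.mul_mem (H.mul_mem ha hb) (H.inv_mem (H.mul_mem hb ha)))
        (by
          rw [mul_right, inv_right, mul_right, mul_right]
          exact mul_inv_eq_one.mpr (mul_comm a.right b.right))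
      exact mul_inv_eq_one.mp hcomm

end main
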